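/- arXiv:2506.00846 — 2 statements merged into one kernel-verified Lean document; each statement's English description precedes it below -/
import Mathlib

section
/- In Setup (DP), the fourth moment of X_1 is uniformly bounded in the width: there exists a constant M (depending only on r, t_1,…,t_r, B, and σ_1²,…,σ_L², but not on n) such that E[X_1⁴] ≤ M for all n. -/
open MeasureTheory ProbabilityTheory Filter Topology Real

noncomputable section

namespace S9

open NNReal ENNReal

lemma pdf_identity (c : ℝ) (v : ℝ≥0) (hv : v ≠ 0) (t : ℝ) :
    gaussianPDFReal 0 v t * Real.exp (c * t)
      = Real.exp (c ^ 2 * v / 2) * gaussianPDFReal (c * v) v t := by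
  have hv' : (0:ℝ) < (v:ℝ) := by positivity
  unfold gaussianPDFReal
  rw [mul_assoc, ← Real.exp_add]
  rw [show Real.exp (c ^ 2 * (v:ℝ) / 2) *
      ((√(2 * π * (v:ℝ)))⁻¹ * Real.exp (-(t - c * (v:ℝ)) ^ 2 / (2 * (v:ℝ))))
      = (√(2 * π * (v:ℝ)))⁻¹ *
        Real.exp (c ^ 2 * (v:ℝ) / 2 + -(t - c * (v:ℝ)) ^ 2 / (2 * (v:ℝ))) from by
    rw [Real.exp_add]; ring]
  congr 1
  field_simp
  ring

/-- mgf of a centered Gaussian, lintegral form. -/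
lemma gauss_exp_lintegral (c : ℝ) (v : ℝ≥0) (hv : v ≠ 0) :
    ∫⁻ t : ℝ, ENNReal.ofReal (Real.exp (c * t)) ∂(gaussianReal 0 v)
      = ENNReal.ofReal (Real.exp (c ^ 2 * v / 2)) := by
  rw [gaussianReal_of_var_ne_zero 0 hv,
    lintegral_withDensity_eq_lintegral_mul _ (measurable_gaussianPDF 0 v)
      (by exact (Real.measurable_exp.comp (measurable_const.mul measurable_id)).ennreal_ofReal)]
  have heq : ∀ t : ℝ, (gaussianPDF 0 v * fun t => ENNReal.ofReal (Real.exp (c * t))) t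
      = ENNReal.ofReal (Real.exp (c ^ 2 * v / 2)) * gaussianPDF (c * v) v t := by
    intro t
    simp only [Pi.mul_apply, gaussianPDF]
    rw [← ENNReal.ofReal_mul (gaussianPDFReal_nonneg 0 v t),
      ← ENNReal.ofReal_mul (Real.exp_nonneg _), pdf_identity c v hv t]
  simp_rw [heq]
  rw [lintegral_const_mul _ (measurable_gaussianPDF (c * v) v),
    lintegral_gaussianPDF_eq_one (c * v) hv, mul_one]

lemma lintegral_pi_prod {δ : Type*} [Fintype δ] [DecidableEq δ]
    (μ : δ → Measure ℝ) [∀ i, SigmaFinite (μ i)]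
    (f : δ → ℝ → ℝ≥0∞) (hf : ∀ i, Measurable (f i)) :
    ∫⁻ v, ∏ i, f i (v i) ∂Measure.pi μ = ∏ i, ∫⁻ t, f i t ∂μ i := by
  have hF : Measurable fun y : δ → ℝ => ∏ i, f i (y i) :=
    Finset.measurable_prod _ fun i _ => (hf i).comp (measurable_pi_apply i)
  have key : ∀ s : Finset δ, ∀ x : δ → ℝ,
      (∫⋯∫⁻_s, (fun y => ∏ i, f i (y i)) ∂μ) x
        = (∏ i ∈ s, ∫⁻ t, f i t ∂μ i) * ∏ i ∈ sᶜ, f i (x i) := by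
    intro s
    induction s using Finset.induction with
    | empty => intro x; simp
    | @insert i s hi ih =>
      intro x
      rw [MeasureTheory.lmarginal_insert _ hF hi]
      simp_rw [ih]
      have hic : i ∉ (insert i s)ᶜ := by simp
      have hsc : sᶜ = insert i (insert i s)ᶜ := by
        rw [Finset.compl_insert, Finset.insert_erase]
        simpa using hi
      have hprod : ∀ t : ℝ, ∏ j ∈ sᶜ, f j (Function.update x i t j)
          = f i t * ∏ j ∈ (insert i s)ᶜ, f j (x j) := by
        intro t
        rw [hsc, Finset.prod_insert hic, Function.update_self]
        congr 1
        refine Finset.prod_congr rfl fun j hj => ?_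
        have hji : j ≠ i := fun h => hic (h ▸ hj)
        rw [Function.update_of_ne hji]
      simp_rw [hprod]
      calc ∫⁻ t, (∏ j ∈ s, ∫⁻ u, f j u ∂μ j) * (f i t * ∏ j ∈ (insert i s)ᶜ, f j (x j)) ∂μ i
          = ((∏ j ∈ s, ∫⁻ u, f j u ∂μ j) * ∏ j ∈ (insert i s)ᶜ, f j (x j)) * ∫⁻ t, f i t ∂μ i := by
            simp_rw [show ∀ t : ℝ, (∏ j ∈ s, ∫⁻ u, f j u ∂μ j) * (f i t * ∏ j ∈ (insert i s)ᶜ, f j (x j)) = f i t * ((∏ j ∈ s, ∫⁻ u, f j u ∂μ j) * ∏ j ∈ (insert i s)ᶜ, f j (x j)) from fun t => by ring]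
            rw [lintegral_mul_const _ (hf i)]; ring
        _ = (∏ j ∈ insert i s, ∫⁻ t, f j t ∂μ j) * ∏ j ∈ (insert i s)ᶜ, f j (x j) := by
            rw [Finset.prod_insert hi]; ring
  rw [MeasureTheory.lintegral_eq_lmarginal_univ (fun _ => (0:ℝ)), key]
  simp

/-- mgf of a linear form w.r.t. a product of centered Gaussians. -/
lemma lin_mgf {δ : Type*} [Fintype δ] [DecidableEq δ] (w : δ → ℝ≥0) (hw : ∀ q, w q ≠ 0)
    (a : δ → ℝ) :
    ∫⁻ v, ENNReal.ofReal (Real.exp (∑ q, a q * v q)) ∂Measure.pi (fun q => gaussianReal 0 (w q))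
      = ENNReal.ofReal (Real.exp (∑ q, a q ^ 2 * w q / 2)) := by
  have h1 : ∀ v : δ → ℝ, ENNReal.ofReal (Real.exp (∑ q, a q * v q))
      = ∏ q, ENNReal.ofReal (Real.exp (a q * v q)) := by
    intro v
    rw [Real.exp_sum, ← ENNReal.ofReal_prod_of_nonneg (fun q _ => (Real.exp_nonneg _))]
  simp_rw [h1]
  rw [lintegral_pi_prod _ (fun q t => ENNReal.ofReal (Real.exp (a q * t))) (fun q =>
    (Real.measurable_exp.comp (measurable_const.mul measurable_id)).ennreal_ofReal)]
  rw [Real.exp_sum, ENNReal.ofReal_prod_of_nonneg (fun q _ => (Real.exp_nonneg _))]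
  exact Finset.prod_congr rfl fun q _ => gauss_exp_lintegral (a q) (w q) (hw q)

/-- Eighth moment of a linear form is bounded via the mgf. -/
lemma lin_eighth {δ : Type*} [Fintype δ] [DecidableEq δ] (w : δ → ℝ≥0) (hw : ∀ q, w q ≠ 0)
    (a : δ → ℝ) :
    ∫⁻ v, ENNReal.ofReal ((∑ q, a q * v q) ^ 8) ∂Measure.pi (fun q => gaussianReal 0 (w q))
      ≤ ENNReal.ofReal (80640 * Real.exp (∑ q, a q ^ 2 * w q / 2)) := by
  have hpt : ∀ p : ℝ, p ^ 8 ≤ 40320 * (Real.exp p + Real.exp (-p)) := by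
    intro p
    have h1 : |p| ^ 8 / (Nat.factorial 8 : ℝ) ≤ Real.exp |p| := by
      calc |p| ^ 8 / (Nat.factorial 8 : ℝ)
          ≤ ∑ i ∈ Finset.range 9, |p| ^ i / (Nat.factorial i : ℝ) := by
            refine Finset.single_le_sum (f := fun i => |p| ^ i / (Nat.factorial i : ℝ))
              (fun i _ => by positivity) (by norm_num)
        _ ≤ Real.exp |p| := Real.sum_le_exp_of_nonneg (abs_nonneg p) 9
    have h2 : Real.exp |p| ≤ Real.exp p + Real.exp (-p) := by
      rcases abs_cases p with ⟨h, _⟩ | ⟨h, _⟩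
      · rw [h]; nlinarith [Real.exp_pos (-p)]
      · rw [h]; nlinarith [Real.exp_pos p]
    have h3 : p ^ 8 = |p| ^ 8 := by rw [pow_abs, abs_of_nonneg (by positivity)]
    have h4 : (Nat.factorial 8 : ℝ) = 40320 := by norm_num [Nat.factorial]
    rw [h4] at h1
    rw [h3]
    linarith
  calc ∫⁻ v, ENNReal.ofReal ((∑ q, a q * v q) ^ 8) ∂Measure.pi (fun q => gaussianReal 0 (w q))
      ≤ ∫⁻ v, (ENNReal.ofReal 40320) * (ENNReal.ofReal (Real.exp (∑ q, a q * v q))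
          + ENNReal.ofReal (Real.exp (-∑ q, a q * v q)))
          ∂Measure.pi (fun q => gaussianReal 0 (w q)) := by
        refine lintegral_mono fun v => ?_
        rw [← ENNReal.ofReal_add (Real.exp_nonneg _) (Real.exp_nonneg _),
          ← ENNReal.ofReal_mul (by norm_num)]
        exact ENNReal.ofReal_le_ofReal (hpt _)
    _ = ENNReal.ofReal 40320 * ((∫⁻ v, ENNReal.ofReal (Real.exp (∑ q, a q * v q))
          ∂Measure.pi (fun q => gaussianReal 0 (w q)))
        + ∫⁻ v, ENNReal.ofReal (Real.exp (-∑ q, a q * v q))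
          ∂Measure.pi (fun q => gaussianReal 0 (w q))) := by
        have hm1 : Measurable fun v : δ → ℝ => ENNReal.ofReal (Real.exp (∑ q, a q * v q)) := by
          refine Measurable.ennreal_ofReal (Real.measurable_exp.comp ?_)
          exact Finset.measurable_sum _ fun q _ => (measurable_pi_apply q).const_mul _
        have hm2 : Measurable fun v : δ → ℝ => ENNReal.ofReal (Real.exp (-∑ q, a q * v q)) := by
          refine Measurable.ennreal_ofReal (Real.measurable_exp.comp ?_)
          exact (Finset.measurable_sum _ fun q _ => (measurable_pi_apply q).const_mul _).neg
        rw [lintegral_const_mul _ (show Measurable fun v : δ → ℝ => ENNReal.ofReal (Real.exp (∑ q, a q * v q)) + ENNReal.ofReal (Real.exp (-∑ q, a q * v q)) from hm1.add hm2), lintegral_add_left hm1]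
    _ ≤ ENNReal.ofReal (80640 * Real.exp (∑ q, a q ^ 2 * w q / 2)) := by
        have e1 := lin_mgf w hw a
        have e2 : (∫⁻ v, ENNReal.ofReal (Real.exp (-∑ q, a q * v q))
            ∂Measure.pi (fun q => gaussianReal 0 (w q)))
            = ENNReal.ofReal (Real.exp (∑ q, a q ^ 2 * w q / 2)) := by
          calc (∫⁻ v, ENNReal.ofReal (Real.exp (-∑ q, a q * v q))
              ∂Measure.pi (fun q => gaussianReal 0 (w q)))
              = ∫⁻ v, ENNReal.ofReal (Real.exp (∑ q, (-(a q)) * v q))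
                ∂Measure.pi (fun q => gaussianReal 0 (w q)) := by
                simp_rw [neg_mul, Finset.sum_neg_distrib]
            _ = ENNReal.ofReal (Real.exp (∑ q, (-(a q)) ^ 2 * w q / 2)) := lin_mgf w hw _
            _ = ENNReal.ofReal (Real.exp (∑ q, a q ^ 2 * w q / 2)) := by simp [neg_sq]
        rw [e1, e2, ← ENNReal.ofReal_add (Real.exp_nonneg _) (Real.exp_nonneg _),
          ← ENNReal.ofReal_mul (by norm_num)]
        exact ENNReal.ofReal_le_ofReal (le_of_eq (by ring))

lemma slice_sum {L n : ℕ} (l0 : Fin L) (α0 : Fin n) (G : Fin L → Fin n → Fin n → ℝ) :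
    ∑ q : Fin L × Fin n × Fin n, (if q.1 = l0 ∧ q.2.1 = α0 then G q.1 q.2.1 q.2.2 else 0)
      = ∑ γ : Fin n, G l0 α0 γ := by
  rw [Fintype.sum_prod_type]
  simp_rw [Fintype.sum_prod_type, ite_and]
  simp [Finset.sum_ite_irrel, Finset.sum_const_zero, Finset.sum_ite_eq']

lemma real_pow4 {r : ℕ} (hr : 1 ≤ r) (t : Fin r → ℝ) (Pv Qv : Fin r → ℝ) :
    (∑ i, t i * (Pv i * Qv i)) ^ 4
      ≤ ∑ i, (r : ℝ) ^ 3 * t i ^ 4 / 2 * (Pv i ^ 8 + Qv i ^ 8) := by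
  have h0 : (∑ i, t i * (Pv i * Qv i)) ^ 4 ≤ (∑ i, |t i * (Pv i * Qv i)|) ^ 4 := by
    have habs : |∑ i, t i * (Pv i * Qv i)| ≤ ∑ i, |t i * (Pv i * Qv i)| :=
      Finset.abs_sum_le_sum_abs _ _
    calc (∑ i, t i * (Pv i * Qv i)) ^ 4 = |∑ i, t i * (Pv i * Qv i)| ^ 4 := by
          rw [pow_abs, abs_of_nonneg (by positivity)]
      _ ≤ (∑ i, |t i * (Pv i * Qv i)|) ^ 4 := by
          exact pow_le_pow_left₀ (abs_nonneg _) habs 4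
  have h1 : (∑ i, |t i * (Pv i * Qv i)|) ^ 4 ≤ (r : ℝ) ^ 3 * ∑ i, |t i * (Pv i * Qv i)| ^ 4 := by
    have := pow_sum_div_card_le_sum_pow (s := Finset.univ)
      (f := fun i => |t i * (Pv i * Qv i)|) (fun i _ => abs_nonneg _) 3
    rw [Finset.card_univ, Fintype.card_fin] at this
    have hr' : (0:ℝ) < (r:ℝ) ^ 3 := by positivity
    rw [div_le_iff₀ hr'] at this
    calc (∑ i, |t i * (Pv i * Qv i)|) ^ 4
        ≤ (∑ i, |t i * (Pv i * Qv i)| ^ 4) * (r:ℝ) ^ 3 := this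
      _ = (r : ℝ) ^ 3 * ∑ i, |t i * (Pv i * Qv i)| ^ 4 := by ring
  have h2 : ∀ i, |t i * (Pv i * Qv i)| ^ 4 ≤ t i ^ 4 * ((Pv i ^ 8 + Qv i ^ 8) / 2) := by
    intro i
    have he : |t i * (Pv i * Qv i)| ^ 4 = t i ^ 4 * (Pv i ^ 4 * Qv i ^ 4) := by
      rw [pow_abs, abs_of_nonneg (by positivity)]; ring
    rw [he]
    have hpq : Pv i ^ 4 * Qv i ^ 4 ≤ (Pv i ^ 8 + Qv i ^ 8) / 2 := by
      nlinarith [sq_nonneg (Pv i ^ 4 - Qv i ^ 4)]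
    exact mul_le_mul_of_nonneg_left hpq (by positivity)
  calc (∑ i, t i * (Pv i * Qv i)) ^ 4
      ≤ (r : ℝ) ^ 3 * ∑ i, |t i * (Pv i * Qv i)| ^ 4 := h0.trans h1
    _ ≤ (r : ℝ) ^ 3 * ∑ i, t i ^ 4 * ((Pv i ^ 8 + Qv i ^ 8) / 2) := by
        refine mul_le_mul_of_nonneg_left (Finset.sum_le_sum fun i _ => h2 i) (by positivity)
    _ = ∑ i, (r : ℝ) ^ 3 * t i ^ 4 / 2 * (Pv i ^ 8 + Qv i ^ 8) := by
        rw [Finset.mul_sum]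
        exact Finset.sum_congr rfl fun i _ => by ring

lemma key_bound {r L n : ℕ} (hr : 1 ≤ r) (hn : 1 ≤ n)
    (t : Fin r → ℝ) (sig : Fin L → ℝ) (hsig : ∀ l, 0 < sig l)
    (B : ℝ) (hB : 0 < B) (lab : Fin r × Fin 2 → Fin L)
    (ξ : (Fin r × Fin 2) × Fin n → ℝ) (hξ : ∀ q, |ξ q| ≤ B) (z : Fin n) :
    ∫⁻ v : Fin L × Fin n × Fin n → ℝ, ENNReal.ofReal ((∑ i : Fin r, t i *
        ((∑ γ : Fin n, v (lab (i, 0), z, γ) * ξ ((i, 0), γ)) *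
         (∑ γ : Fin n, v (lab (i, 1), z, γ) * ξ ((i, 1), γ)))) ^ 4)
      ∂Measure.pi (fun q : Fin L × Fin n × Fin n => gaussianReal 0 ((sig q.1 ^ 2 / n).toNNReal))
      ≤ ENNReal.ofReal ((r : ℝ) ^ 3 * (∑ i, t i ^ 4) *
          (80640 * Real.exp (B ^ 2 * (∑ l, sig l ^ 2) / 2))) := by
  have hn' : (0:ℝ) < (n:ℝ) := by exact_mod_cast hn
  set w : Fin L × Fin n × Fin n → ℝ≥0 := fun q => (sig q.1 ^ 2 / n).toNNReal with hw_def
  have hw : ∀ q, w q ≠ 0 := by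
    intro q
    simp only [hw_def, ne_eq, Real.toNNReal_eq_zero, not_le]
    exact div_pos (pow_pos (hsig q.1) 2) hn'
  have hwcoe : ∀ q, ((w q : ℝ≥0) : ℝ) = sig q.1 ^ 2 / n := by
    intro q
    exact Real.coe_toNNReal _ (by positivity)
  set E : ℝ := Real.exp (B ^ 2 * (∑ l, sig l ^ 2) / 2) with hE_def
  have hE0 : 0 < E := Real.exp_pos _
  set a : Fin r × Fin 2 → (Fin L × Fin n × Fin n) → ℝ :=
    fun k q => if q.1 = lab k ∧ q.2.1 = z then ξ (k, q.2.2) else 0 with ha_def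
  set P : Fin r × Fin 2 → (Fin L × Fin n × Fin n → ℝ) → ℝ :=
    fun k v => ∑ q, a k q * v q with hP_def
  have h_eq : ∀ (k : Fin r × Fin 2) (v : Fin L × Fin n × Fin n → ℝ),
      ∑ γ : Fin n, v (lab k, z, γ) * ξ (k, γ) = P k v := by
    intro k v
    have hpt : ∀ q : Fin L × Fin n × Fin n, a k q * v q
        = (if q.1 = lab k ∧ q.2.1 = z then ξ (k, q.2.2) * v (q.1, q.2.1, q.2.2) else 0) := by
      intro q
      simp only [ha_def]
      by_cases h : q.1 = lab k ∧ q.2.1 = z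
      · rw [if_pos h, if_pos h]
      · rw [if_neg h, if_neg h, zero_mul]
    rw [hP_def]
    simp only []
    rw [Finset.sum_congr rfl (fun q _ => hpt q),
      slice_sum (lab k) z (fun l α γ => ξ (k, γ) * v (l, α, γ))]
    exact Finset.sum_congr rfl fun γ _ => mul_comm _ _
  have hvar : ∀ k : Fin r × Fin 2, ∑ q, a k q ^ 2 * (w q : ℝ) / 2
      ≤ B ^ 2 * (∑ l, sig l ^ 2) / 2 := by
    intro k
    have hpt : ∀ q : Fin L × Fin n × Fin n, a k q ^ 2 * (w q : ℝ) / 2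
        = (if q.1 = lab k ∧ q.2.1 = z then ξ (k, q.2.2) ^ 2 * (sig q.1 ^ 2 / n) / 2 else 0) := by
      intro q
      simp only [ha_def]
      by_cases h : q.1 = lab k ∧ q.2.1 = z
      · rw [if_pos h, if_pos h, hwcoe q, h.1]
      · rw [if_neg h, if_neg h]
        simp
    rw [Finset.sum_congr rfl (fun q _ => hpt q),
      slice_sum (lab k) z (fun l α γ => ξ (k, γ) ^ 2 * (sig l ^ 2 / n) / 2)]
    have hterm : ∀ γ : Fin n, ξ (k, γ) ^ 2 * (sig (lab k) ^ 2 / n) / 2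
        ≤ B ^ 2 * (sig (lab k) ^ 2 / n) / 2 := by
      intro γ
      have h1 : ξ (k, γ) ^ 2 ≤ B ^ 2 := by
        have := hξ (k, γ)
        nlinarith [abs_nonneg (ξ (k, γ)), sq_abs (ξ (k, γ))]
      have h2 : (0:ℝ) ≤ sig (lab k) ^ 2 / n / 2 := by positivity
      calc ξ (k, γ) ^ 2 * (sig (lab k) ^ 2 / n) / 2
          = ξ (k, γ) ^ 2 * (sig (lab k) ^ 2 / n / 2) := by ring
        _ ≤ B ^ 2 * (sig (lab k) ^ 2 / n / 2) := mul_le_mul_of_nonneg_right h1 h2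
        _ = B ^ 2 * (sig (lab k) ^ 2 / n) / 2 := by ring
    calc ∑ γ : Fin n, ξ (k, γ) ^ 2 * (sig (lab k) ^ 2 / n) / 2
        ≤ ∑ _γ : Fin n, B ^ 2 * (sig (lab k) ^ 2 / n) / 2 :=
          Finset.sum_le_sum fun γ _ => hterm γ
      _ = n * (B ^ 2 * (sig (lab k) ^ 2 / n) / 2) := by
          rw [Finset.sum_const, Finset.card_univ, Fintype.card_fin, nsmul_eq_mul]
      _ = B ^ 2 * sig (lab k) ^ 2 / 2 := by field_simp
      _ ≤ B ^ 2 * (∑ l, sig l ^ 2) / 2 := by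
          have : sig (lab k) ^ 2 ≤ ∑ l, sig l ^ 2 :=
            Finset.single_le_sum (f := fun l => sig l ^ 2) (fun l _ => by positivity)
              (Finset.mem_univ (lab k))
          nlinarith [sq_nonneg B]
  have hm : ∀ k : Fin r × Fin 2, Measurable fun v : Fin L × Fin n × Fin n → ℝ =>
      ENNReal.ofReal ((P k v) ^ 8) := by
    intro k
    exact ((Finset.measurable_sum _ fun q _ =>
      (measurable_pi_apply q).const_mul _).pow_const 8).ennreal_ofReal
  have hP8 : ∀ k : Fin r × Fin 2,
      ∫⁻ v, ENNReal.ofReal ((P k v) ^ 8)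
        ∂Measure.pi (fun q : Fin L × Fin n × Fin n => gaussianReal 0 (w q))
        ≤ ENNReal.ofReal (80640 * E) := by
    intro k
    refine (lin_eighth w hw (a k)).trans (ENNReal.ofReal_le_ofReal ?_)
    have := Real.exp_le_exp.2 (hvar k)
    nlinarith [Real.exp_pos (∑ q, a k q ^ 2 * (w q : ℝ) / 2)]
  set c : Fin r → ℝ≥0∞ := fun i => ENNReal.ofReal ((r : ℝ) ^ 3 * t i ^ 4 / 2) with hc_def
  calc ∫⁻ v : Fin L × Fin n × Fin n → ℝ, ENNReal.ofReal ((∑ i : Fin r, t i *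
        ((∑ γ : Fin n, v (lab (i, 0), z, γ) * ξ ((i, 0), γ)) *
         (∑ γ : Fin n, v (lab (i, 1), z, γ) * ξ ((i, 1), γ)))) ^ 4)
      ∂Measure.pi (fun q : Fin L × Fin n × Fin n => gaussianReal 0 (w q))
      ≤ ∫⁻ v, ∑ i : Fin r, c i * (ENNReal.ofReal ((P (i, 0) v) ^ 8)
          + ENNReal.ofReal ((P (i, 1) v) ^ 8))
        ∂Measure.pi (fun q : Fin L × Fin n × Fin n => gaussianReal 0 (w q)) := by
        refine lintegral_mono fun v => ?_
        simp_rw [h_eq]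
        calc ENNReal.ofReal ((∑ i : Fin r, t i * (P (i, 0) v * P (i, 1) v)) ^ 4)
            ≤ ENNReal.ofReal (∑ i : Fin r,
                (r : ℝ) ^ 3 * t i ^ 4 / 2 * ((P (i, 0) v) ^ 8 + (P (i, 1) v) ^ 8)) :=
              ENNReal.ofReal_le_ofReal (real_pow4 hr t _ _)
          _ = ∑ i : Fin r, ENNReal.ofReal
                ((r : ℝ) ^ 3 * t i ^ 4 / 2 * ((P (i, 0) v) ^ 8 + (P (i, 1) v) ^ 8)) :=
              ENNReal.ofReal_sum_of_nonneg fun i _ => by positivity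
          _ = ∑ i : Fin r, c i * (ENNReal.ofReal ((P (i, 0) v) ^ 8)
                + ENNReal.ofReal ((P (i, 1) v) ^ 8)) := by
              refine Finset.sum_congr rfl fun i _ => ?_
              rw [ENNReal.ofReal_mul (by positivity),
                ENNReal.ofReal_add (by positivity) (by positivity)]
    _ = ∑ i : Fin r, c i * ((∫⁻ v, ENNReal.ofReal ((P (i, 0) v) ^ 8)
          ∂Measure.pi (fun q : Fin L × Fin n × Fin n => gaussianReal 0 (w q)))
        + ∫⁻ v, ENNReal.ofReal ((P (i, 1) v) ^ 8)
          ∂Measure.pi (fun q : Fin L × Fin n × Fin n => gaussianReal 0 (w q))) := by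
      rw [lintegral_finset_sum _ (fun i _ =>
        (show Measurable fun v => c i * (ENNReal.ofReal ((P (i, 0) v) ^ 8) + ENNReal.ofReal ((P (i, 1) v) ^ 8)) from ((hm (i, 0)).add (hm (i, 1))).const_mul _))]
      refine Finset.sum_congr rfl fun i _ => ?_
      rw [lintegral_const_mul _ (show Measurable fun v => ENNReal.ofReal ((P (i, 0) v) ^ 8) + ENNReal.ofReal ((P (i, 1) v) ^ 8) from (hm (i, 0)).add (hm (i, 1))),
        lintegral_add_left (hm (i, 0))]
    _ ≤ ∑ i : Fin r, c i * (ENNReal.ofReal (80640 * E) + ENNReal.ofReal (80640 * E)) := by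
      exact Finset.sum_le_sum fun i _ =>
        mul_le_mul_right (add_le_add (hP8 (i, 0)) (hP8 (i, 1))) _
    _ ≤ ENNReal.ofReal ((r : ℝ) ^ 3 * (∑ i, t i ^ 4) * (80640 * E)) := by
      have hKK : ENNReal.ofReal (80640 * E) + ENNReal.ofReal (80640 * E)
          = ENNReal.ofReal (161280 * E) := by
        rw [← ENNReal.ofReal_add (by positivity) (by positivity)]
        congr 1
        ring
      simp_rw [hKK, hc_def]
      have hstep : ∀ i : Fin r, ENNReal.ofReal ((r : ℝ) ^ 3 * t i ^ 4 / 2)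
          * ENNReal.ofReal (161280 * E)
          = ENNReal.ofReal ((r : ℝ) ^ 3 * t i ^ 4 / 2 * (161280 * E)) :=
        fun i => (ENNReal.ofReal_mul (by positivity)).symm
      simp_rw [hstep]
      rw [← ENNReal.ofReal_sum_of_nonneg fun i _ => by positivity]
      refine ENNReal.ofReal_le_ofReal (le_of_eq ?_)
      calc ∑ i : Fin r, (r : ℝ) ^ 3 * t i ^ 4 / 2 * (161280 * E)
          = ∑ i : Fin r, ((r : ℝ) ^ 3 * (80640 * E)) * t i ^ 4 :=
            Finset.sum_congr rfl fun i _ => by ring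
        _ = ((r : ℝ) ^ 3 * (80640 * E)) * ∑ i, t i ^ 4 := by rw [← Finset.mul_sum]
        _ = (r : ℝ) ^ 3 * (∑ i, t i ^ 4) * (80640 * E) := by ring

end S9

/-- In Setup (DP), the fourth moment of `X_1` (index `0` here) is bounded uniformly in the width `n`. -/
theorem statement9
    (r L : ℕ) (hr : 1 ≤ r) (hL : 1 ≤ L)
    (t : Fin r → ℝ) (sig : Fin L → ℝ) (hsig : ∀ l, 0 < sig l)
    (B : ℝ) (hB : 0 < B)
    (lab : Fin r × Fin 2 → Fin L) (hlab : ∀ i : Fin r, lab (i, 0) ≠ lab (i, 1))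
    (Ω : Type) [MeasurableSpace Ω] (μ : Measure Ω) [IsProbabilityMeasure μ]
    (V : ℕ → Fin L → Ω → ℕ → ℕ → ℝ)
    (x : ℕ → Fin r × Fin 2 → ℕ → Ω → ℝ)
    (hVmeas : ∀ n l a b, Measurable (fun ω => V n l ω a b))
    (hxmeas : ∀ n k γ, Measurable (x n k γ))
    (hVlaw : ∀ n : ℕ, 1 ≤ n →
      Measure.map (fun ω => fun q : Fin L × Fin n × Fin n => V n q.1 ω q.2.1 q.2.2) μ
        = Measure.pi
            (fun q : Fin L × Fin n × Fin n => gaussianReal 0 ((sig q.1 ^ 2 / n).toNNReal)))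
    (hindep : ∀ n : ℕ, IndepFun
      (fun ω => fun q : Fin L × Fin n × Fin n => V n q.1 ω q.2.1 q.2.2)
      (fun ω => fun q : (Fin r × Fin 2) × Fin n => x n q.1 q.2 ω) μ)
    (hxbound : ∀ n : ℕ, ∀ᵐ ω ∂μ, ∀ k : Fin r × Fin 2, ∀ γ < n, |x n k γ ω| ≤ B)
    (c : Fin r × Fin 2 → Fin r × Fin 2 → ℝ)
    (hc : ∀ k k' : Fin r × Fin 2, ∀ᵐ ω ∂μ, Tendsto
      (fun n : ℕ => (∑ γ ∈ Finset.range n, x n k γ ω * x n k' γ ω) / (n : ℝ))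
      atTop (𝓝 (c k k')))
    (X : ℕ → ℕ → Ω → ℝ)
    (hX : ∀ n α ω, X n α ω = ∑ i : Fin r, t i *
      ∑ γ1 ∈ Finset.range n, ∑ γ2 ∈ Finset.range n,
        V n (lab (i, 0)) ω α γ1 * V n (lab (i, 1)) ω α γ2 *
          x n (i, 0) γ1 ω * x n (i, 1) γ2 ω)
:
    ∃ M : ℝ, ∀ n : ℕ, 1 ≤ n → ∫ ω, (X n 0 ω) ^ 4 ∂μ ≤ M := by
  set M : ℝ := (r : ℝ) ^ 3 * (∑ i, t i ^ 4) *
    (80640 * Real.exp (B ^ 2 * (∑ l, sig l ^ 2) / 2)) with hM_def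
  have hM0 : 0 ≤ M := by positivity
  refine ⟨M, fun n hn => ?_⟩
  set z : Fin n := ⟨0, hn⟩ with hz_def
  set ΦV : Ω → (Fin L × Fin n × Fin n → ℝ) :=
    fun ω => fun q : Fin L × Fin n × Fin n => V n q.1 ω q.2.1 q.2.2 with hΦV_def
  set ΦX : Ω → ((Fin r × Fin 2) × Fin n → ℝ) :=
    fun ω => fun q : (Fin r × Fin 2) × Fin n => x n q.1 q.2 ω with hΦX_def
  have mV : Measurable ΦV :=
    measurable_pi_lambda _ fun q => hVmeas n q.1 q.2.1 q.2.2
  have mX : Measurable ΦX :=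
    measurable_pi_lambda _ fun q => hxmeas n q.1 q.2
  set G : (Fin L × Fin n × Fin n → ℝ) × ((Fin r × Fin 2) × Fin n → ℝ) → ℝ :=
    fun p => ∑ i : Fin r, t i *
      ((∑ γ : Fin n, p.1 (lab (i, 0), z, γ) * p.2 ((i, 0), γ)) *
       (∑ γ : Fin n, p.1 (lab (i, 1), z, γ) * p.2 ((i, 1), γ))) with hG_def
  have hGmeas : Measurable G := by
    refine Finset.measurable_sum _ fun i _ => Measurable.const_mul (Measurable.mul ?_ ?_) _ <;>
    · refine Finset.measurable_sum _ fun γ _ => Measurable.mul ?_ ?_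
      · exact (measurable_pi_apply _).comp measurable_fst
      · exact (measurable_pi_apply _).comp measurable_snd
  have hXG : ∀ ω, X n 0 ω = G (ΦV ω, ΦX ω) := by
    intro ω
    rw [hX n 0 ω, hG_def]
    refine Finset.sum_congr rfl fun i _ => ?_
    congr 1
    have hz0 : ((z : Fin n) : ℕ) = 0 := rfl
    rw [Finset.sum_mul_sum]
    simp only [Finset.sum_range, hΦV_def, hΦX_def, hz0]
    exact Finset.sum_congr rfl fun γ1 _ => Finset.sum_congr rfl fun γ2 _ => by ring
  have hXmeas : Measurable fun ω => X n 0 ω := by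
    have : (fun ω => X n 0 ω) = fun ω => G (ΦV ω, ΦX ω) := funext hXG
    rw [this]
    exact hGmeas.comp (mV.prodMk mX)
  have hint : Measurable fun p : (Fin L × Fin n × Fin n → ℝ) × ((Fin r × Fin 2) × Fin n → ℝ)
      => ENNReal.ofReal ((G p) ^ 4) := (hGmeas.pow_const 4).ennreal_ofReal
  -- reduce to a lintegral bound
  rw [integral_eq_lintegral_of_nonneg_ae (ae_of_all μ fun ω => by positivity)
    (hXmeas.pow_const 4).aestronglyMeasurable]
  refine ENNReal.toReal_le_of_le_ofReal hM0 ?_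
  -- move to the product law
  have hmap : μ.map (fun ω => (ΦV ω, ΦX ω)) = (μ.map ΦV).prod (μ.map ΦX) :=
    (indepFun_iff_map_prod_eq_prod_map_map mV.aemeasurable mX.aemeasurable).1 (hindep n)
  haveI : IsProbabilityMeasure (μ.map ΦX) := Measure.isProbabilityMeasure_map mX.aemeasurable
  have hae : ∀ᵐ ξ ∂(μ.map ΦX), ∀ q : (Fin r × Fin 2) × Fin n, |ξ q| ≤ B := by
    rw [MeasureTheory.ae_map_iff mX.aemeasurable]
    · filter_upwards [hxbound n] with ω h
      intro q
      exact h q.1 q.2 q.2.isLt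
    · rw [Set.setOf_forall]
      exact MeasurableSet.iInter fun q =>
        measurableSet_le (measurable_pi_apply q).abs measurable_const
  calc ∫⁻ ω, ENNReal.ofReal ((X n 0 ω) ^ 4) ∂μ
      = ∫⁻ ω, ENNReal.ofReal ((G (ΦV ω, ΦX ω)) ^ 4) ∂μ := by
        refine lintegral_congr fun ω => ?_
        rw [hXG ω]
    _ = ∫⁻ p, ENNReal.ofReal ((G p) ^ 4) ∂(μ.map (fun ω => (ΦV ω, ΦX ω))) :=
        (lintegral_map hint (mV.prodMk mX)).symm
    _ = ∫⁻ p, ENNReal.ofReal ((G p) ^ 4)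
          ∂((Measure.pi (fun q : Fin L × Fin n × Fin n =>
              gaussianReal 0 ((sig q.1 ^ 2 / n).toNNReal))).prod (μ.map ΦX)) := by
        rw [hmap, hVlaw n hn]
    _ = ∫⁻ ξ, ∫⁻ v, ENNReal.ofReal ((G (v, ξ)) ^ 4)
          ∂Measure.pi (fun q : Fin L × Fin n × Fin n =>
              gaussianReal 0 ((sig q.1 ^ 2 / n).toNNReal)) ∂(μ.map ΦX) :=
        lintegral_prod_symm _ hint.aemeasurable
    _ ≤ ∫⁻ _ξ, ENNReal.ofReal M ∂(μ.map ΦX) := by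
        refine lintegral_mono_ae ?_
        filter_upwards [hae] with ξ hξ
        exact S9.key_bound hr hn t sig hsig B hB lab ξ hξ z
    _ = ENNReal.ofReal M := by
        rw [lintegral_const, measure_univ, mul_one]
end
end

section
/- In Setup (DP), the third absolute moment of X_1 is negligible compared to √n: n^{-1/2} · E[|X_1|³] → 0 as the width n tends to infinity. -/
open MeasureTheory ProbabilityTheory Filter Topology Real

noncomputable section

open scoped ENNReal NNReal



/-- Tonelli for a finite product of measures on ℝ, product of single-coordinate functions. -/
theorem lintegral_pi_prod_fin {n : ℕ} (μ : Fin n → Measure ℝ) [∀ i, SigmaFinite (μ i)]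
    (f : Fin n → ℝ → ℝ≥0∞) (hf : ∀ i, Measurable (f i)) :
    ∫⁻ y : Fin n → ℝ, ∏ i, f i (y i) ∂(Measure.pi μ) = ∏ i, ∫⁻ z, f i z ∂(μ i) := by
  induction n with
  | zero =>
      simp only [Finset.univ_eq_empty, Finset.prod_empty]
      rw [lintegral_const, one_mul, Measure.pi_univ]
      simp
  | succ n ih =>
      have hmp := (MeasureTheory.measurePreserving_piFinSuccAbove μ 0).symm
        ((MeasurableEquiv.piFinSuccAbove (fun _ => ℝ) 0))
      simp only [Fin.zero_succAbove] at hmp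
      calc ∫⁻ y : Fin (n+1) → ℝ, ∏ i, f i (y i) ∂(Measure.pi μ)
          = ∫⁻ p : ℝ × (Fin n → ℝ),
              ∏ i, f i (((MeasurableEquiv.piFinSuccAbove (fun _ => ℝ) 0).symm p) i)
              ∂((μ 0).prod (Measure.pi fun j => μ (Fin.succ j))) := by
            exact (hmp.lintegral_comp_emb
              (MeasurableEquiv.piFinSuccAbove (fun _ => ℝ) 0).symm.measurableEmbedding
              (fun y => ∏ i, f i (y i))).symm
        _ = ∫⁻ p : ℝ × (Fin n → ℝ), f 0 p.1 * ∏ j, f (Fin.succ j) (p.2 j)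
              ∂((μ 0).prod (Measure.pi fun j => μ (Fin.succ j))) := by
            refine lintegral_congr fun p => ?_
            rw [Fin.prod_univ_succ]
            simp [MeasurableEquiv.piFinSuccAbove_symm_apply, Fin.insertNthEquiv,
              Fin.insertNth_zero, Fin.zero_succAbove]
        _ = (∫⁻ z, f 0 z ∂(μ 0)) *
              ∫⁻ y : Fin n → ℝ, ∏ j, f (Fin.succ j) (y j) ∂(Measure.pi fun j => μ (Fin.succ j)) :=
            lintegral_prod_mul (hf 0).aemeasurable
              (Finset.measurable_prod _ fun j _ =>
                (hf _).comp (measurable_pi_apply j)).aemeasurable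
        _ = (∫⁻ z, f 0 z ∂(μ 0)) * ∏ j, ∫⁻ z, f (Fin.succ j) z ∂(μ (Fin.succ j)) := by
            rw [ih (fun j => μ (Fin.succ j)) (fun j => f (Fin.succ j)) (fun j => hf _)]
        _ = ∏ i, ∫⁻ z, f i z ∂(μ i) := by rw [Fin.prod_univ_succ]

theorem lintegral_pi_prod {ι : Type*} [Fintype ι] (μ : ι → Measure ℝ) [∀ i, SigmaFinite (μ i)]
    (f : ι → ℝ → ℝ≥0∞) (hf : ∀ i, Measurable (f i)) :
    ∫⁻ y : ι → ℝ, ∏ i, f i (y i) ∂(Measure.pi μ) = ∏ i, ∫⁻ z, f i z ∂(μ i) := by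
  let e := (Fintype.equivFin ι).symm
  have hmp := (MeasureTheory.measurePreserving_piCongrLeft (α := fun _ : ι => ℝ) (μ := μ) e)
  calc ∫⁻ y : ι → ℝ, ∏ i, f i (y i) ∂(Measure.pi μ)
      = ∫⁻ y' : Fin (Fintype.card ι) → ℝ,
          ∏ i, f i ((MeasurableEquiv.piCongrLeft (fun _ : ι => ℝ) e y') i)
          ∂(Measure.pi fun i' => μ (e i')) := by
        exact (hmp.lintegral_comp_emb
          (MeasurableEquiv.piCongrLeft (fun _ : ι => ℝ) e).measurableEmbedding
          (fun y => ∏ i, f i (y i))).symm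
    _ = ∫⁻ y' : Fin (Fintype.card ι) → ℝ, ∏ i', f (e i') (y' i')
          ∂(Measure.pi fun i' => μ (e i')) := by
        refine lintegral_congr fun y' => ?_
        rw [← e.prod_comp]
        refine Finset.prod_congr rfl fun i' _ => ?_
        congr 1
        simp [MeasurableEquiv.coe_piCongrLeft, Equiv.piCongrLeft_apply_apply]
    _ = ∏ i', ∫⁻ z, f (e i') z ∂(μ (e i')) :=
        lintegral_pi_prod_fin _ _ (fun i' => hf _)
    _ = ∏ i, ∫⁻ z, f i z ∂(μ i) := e.prod_comp (fun i => ∫⁻ z, f i z ∂(μ i))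

theorem gaussian_mgf_lintegral (a : ℝ) {v : ℝ≥0} (hv : v ≠ 0) :
    ∫⁻ z, ENNReal.ofReal (rexp (a * z)) ∂(gaussianReal 0 v)
      = ENNReal.ofReal (rexp ((v : ℝ) * a ^ 2 / 2)) := by
  have hvpos : (0 : ℝ) < (v : ℝ) := by
    exact_mod_cast (zero_le (a := v)).lt_of_ne (fun h => hv h.symm)
  rw [gaussianReal_of_var_ne_zero 0 hv,
    lintegral_withDensity_eq_lintegral_mul _ (measurable_gaussianPDF 0 v)
      (by exact ((measurable_const_mul a).exp).ennreal_ofReal :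
        Measurable fun z : ℝ => ENNReal.ofReal (rexp (a * z)))]
  have hpt : ∀ z : ℝ, (gaussianPDF 0 v * fun z => ENNReal.ofReal (rexp (a * z))) z
      = ENNReal.ofReal (rexp ((v : ℝ) * a ^ 2 / 2)) * gaussianPDF ((v : ℝ) * a) v z := by
    intro z
    simp only [Pi.mul_apply, gaussianPDF]
    rw [← ENNReal.ofReal_mul (gaussianPDFReal_nonneg 0 v z),
      ← ENNReal.ofReal_mul (Real.exp_nonneg _)]
    congr 1
    have key : rexp (-(z - 0) ^ 2 / (2 * (v : ℝ))) * rexp (a * z)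
        = rexp ((v : ℝ) * a ^ 2 / 2) * rexp (-(z - (v : ℝ) * a) ^ 2 / (2 * (v : ℝ))) := by
      rw [← Real.exp_add, ← Real.exp_add]
      congr 1
      field_simp
      ring
    simp only [gaussianPDFReal]
    rw [mul_assoc, key]
    ring
  rw [lintegral_congr hpt, lintegral_const_mul _ (measurable_gaussianPDF _ v),
    lintegral_gaussianPDF_eq_one _ hv, mul_one]

theorem pow_six_le_exp (s : ℝ) : s ^ 6 ≤ 720 * (rexp s + rexp (-s)) := by
  have h1 : s ^ 6 = |s| ^ 6 := by rw [← abs_pow, abs_of_nonneg (by positivity)]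
  have h2 : |s| ^ 6 / 720 ≤ rexp |s| := by
    have h3 := Real.sum_le_exp_of_nonneg (abs_nonneg s) 7
    have h4 : |s| ^ 6 / (Nat.factorial 6 : ℝ) ≤ ∑ i ∈ Finset.range 7, |s| ^ i / (Nat.factorial i) := by
      refine Finset.single_le_sum (f := fun i => |s| ^ i / (Nat.factorial i : ℝ)) ?_ ?_
      · intro i _; positivity
      · simp
    have h5 : (Nat.factorial 6 : ℝ) = 720 := by norm_num [Nat.factorial]
    rw [h5] at h4
    linarith
  have h6 : rexp |s| ≤ rexp s + rexp (-s) := by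
    rcases abs_cases s with ⟨h, _⟩ | ⟨h, _⟩
    · rw [h]; nlinarith [Real.exp_pos (-s)]
    · rw [h]; nlinarith [Real.exp_pos s]
  nlinarith [pow_nonneg (abs_nonneg s) 6]

theorem mgf_core_bound
    (r L : ℕ) (sig : Fin L → ℝ) (hsig : ∀ l, 0 < sig l)
    (B : ℝ) (hB : 0 ≤ B)
    (Ω : Type) [MeasurableSpace Ω] (μ : Measure Ω) [IsProbabilityMeasure μ]
    (n : ℕ) (hn : 1 ≤ n)
    (V : Fin L → Ω → ℕ → ℕ → ℝ)
    (x : Fin r × Fin 2 → ℕ → Ω → ℝ)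
    (hVmeas : ∀ l a b, Measurable (fun ω => V l ω a b))
    (hxmeas : ∀ k γ, Measurable (x k γ))
    (hVlaw : Measure.map (fun ω => fun q : Fin L × Fin n × Fin n => V q.1 ω q.2.1 q.2.2) μ
        = Measure.pi
            (fun q : Fin L × Fin n × Fin n => gaussianReal 0 ((sig q.1 ^ 2 / n).toNNReal)))
    (hindep : IndepFun
      (fun ω => fun q : Fin L × Fin n × Fin n => V q.1 ω q.2.1 q.2.2)
      (fun ω => fun q : (Fin r × Fin 2) × Fin n => x q.1 q.2 ω) μ)
    (hxbound : ∀ᵐ ω ∂μ, ∀ k : Fin r × Fin 2, ∀ γ < n, |x k γ ω| ≤ B)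
    (k : Fin r × Fin 2) (l : Fin L) (ε : ℝ) (hε : ε = 1 ∨ ε = -1) :
    ∫⁻ ω, ENNReal.ofReal
        (rexp (ε * ∑ γ ∈ Finset.range n, V l ω 0 γ * x k γ ω)) ∂μ
      ≤ ENNReal.ofReal (rexp (sig l ^ 2 * B ^ 2 / 2)) := by
  obtain ⟨m, rfl⟩ : ∃ m, n = m + 1 := ⟨n - 1, by omega⟩
  set n := m + 1
  have hε2 : ε ^ 2 = 1 := by rcases hε with h | h <;> rw [h] <;> norm_num
  -- notation
  set F : Ω → (Fin L × Fin n × Fin n → ℝ) :=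
    fun ω => fun q : Fin L × Fin n × Fin n => V q.1 ω q.2.1 q.2.2 with hF
  set G : Ω → ((Fin r × Fin 2) × Fin n → ℝ) :=
    fun ω => fun q : (Fin r × Fin 2) × Fin n => x q.1 q.2 ω with hG
  have hFmeas : Measurable F :=
    measurable_pi_lambda _ (fun q => hVmeas q.1 q.2.1 q.2.2)
  have hGmeas : Measurable G :=
    measurable_pi_lambda _ (fun q => hxmeas q.1 q.2)
  set φ : (Fin L × Fin n × Fin n → ℝ) × ((Fin r × Fin 2) × Fin n → ℝ) → ℝ≥0∞ :=
    fun p => ENNReal.ofReal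
      (rexp (ε * ∑ γ' : Fin n, p.1 (l, 0, γ') * p.2 (k, γ'))) with hφ
  have hφmeas : Measurable φ := by
    apply Measurable.ennreal_ofReal
    apply Measurable.exp
    apply Measurable.const_mul
    apply Finset.measurable_sum
    intro γ' _
    exact ((measurable_pi_apply _).comp measurable_fst).mul
      ((measurable_pi_apply _).comp measurable_snd)
  -- step 1 : rewrite integrand
  have hstep1 : ∀ ω, ENNReal.ofReal
      (rexp (ε * ∑ γ ∈ Finset.range n, V l ω 0 γ * x k γ ω)) = φ (F ω, G ω) := by
    intro ω
    simp only [hφ, hF, hG]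
    congr 2
    rw [← Fin.sum_univ_eq_sum_range (fun γ => V l ω 0 γ * x k γ ω) n]
    rfl
  simp_rw [hstep1]
  -- step 2-3 : pass to product measure
  have hmap : μ.map (fun ω => (F ω, G ω)) = (μ.map F).prod (μ.map G) :=
    (indepFun_iff_map_prod_eq_prod_map_map hFmeas.aemeasurable hGmeas.aemeasurable).mp hindep
  have h2 : ∫⁻ ω, φ (F ω, G ω) ∂μ = ∫⁻ p, φ p ∂((μ.map F).prod (μ.map G)) := by
    rw [← hmap, lintegral_map hφmeas (hFmeas.prodMk hGmeas)]
  rw [h2, hVlaw]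
  haveI : IsProbabilityMeasure (μ.map G) := Measure.isProbabilityMeasure_map hGmeas.aemeasurable
  rw [lintegral_prod_symm _ hφmeas.aemeasurable]
  -- variance facts
  set v : Fin L × Fin n × Fin n → ℝ≥0 := fun q => ((sig q.1 : ℝ) ^ 2 / n).toNNReal with hv
  have hvne : ∀ q, v q ≠ 0 := by
    intro q
    simp only [hv, ne_eq, Real.toNNReal_eq_zero, not_le]
    have h1 := hsig q.1
    have h2 : (0:ℝ) < n := by exact_mod_cast Nat.succ_pos m
    positivity
  have hvcoe : ∀ q, ((v q : ℝ)) = sig q.1 ^ 2 / n := by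
    intro q
    simp only [hv]
    rw [Real.coe_toNNReal]
    have h1 := hsig q.1
    have h2 : (0:ℝ) < n := by exact_mod_cast Nat.succ_pos m
    positivity
  -- step 6 : a.e. bound on y
  have hae : ∀ᵐ y ∂(μ.map G), ∀ γ' : Fin n, |y (k, γ')| ≤ B := by
    rw [ae_map_iff hGmeas.aemeasurable]
    · filter_upwards [hxbound] with ω hω γ'
      exact hω k γ' γ'.isLt
    · rw [Set.setOf_forall]
      exact MeasurableSet.iInter fun γ' =>
        measurableSet_le ((measurable_pi_apply _).abs) measurable_const
  -- step 7 : inner bound for good y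
  have hinner : ∀ y : (Fin r × Fin 2) × Fin n → ℝ, (∀ γ' : Fin n, |y (k, γ')| ≤ B) →
      ∫⁻ u, φ (u, y) ∂(Measure.pi fun q => gaussianReal 0 (v q))
        ≤ ENNReal.ofReal (rexp (sig l ^ 2 * B ^ 2 / 2)) := by
    intro y hy
    set c : Fin L × Fin n × Fin n → ℝ :=
      fun q => if q.1 = l ∧ q.2.1 = 0 then ε * y (k, q.2.2) else 0 with hc
    set s : Finset (Fin L × Fin n × Fin n) :=
      Finset.univ.image (fun γ' : Fin n => (l, (0 : Fin n), γ')) with hs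
    have hinj : Function.Injective (fun γ' : Fin n => (l, (0 : Fin n), γ')) := by
      intro a b hab
      simpa using hab
    have hnots : ∀ q, q ∉ s → c q = 0 := by
      intro q hq
      simp only [hc]
      rw [if_neg]
      rintro ⟨h1, h2⟩
      exact hq (Finset.mem_image.mpr ⟨q.2.2, Finset.mem_univ _, by
        rw [← h1, ← h2]⟩)
    have hsum : ∀ u : Fin L × Fin n × Fin n → ℝ,
        ε * ∑ γ' : Fin n, u (l, 0, γ') * y (k, γ') = ∑ q, c q * u q := by
      intro u
      rw [← Finset.sum_subset (Finset.subset_univ s)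
        (fun q _ hq => by rw [hnots q hq, zero_mul])]
      rw [hs, Finset.sum_image (fun a _ b _ h => hinj h)]
      rw [Finset.mul_sum]
      refine Finset.sum_congr rfl fun γ' _ => ?_
      simp only [hc, and_self, if_true]
      ring
    have hvar : ∑ q, (v q : ℝ) * c q ^ 2 / 2 ≤ sig l ^ 2 * B ^ 2 / 2 := by
      rw [← Finset.sum_subset (Finset.subset_univ s)
        (fun q _ hq => by rw [hnots q hq]; ring)]
      rw [hs, Finset.sum_image (fun a _ b _ h => hinj h)]
      have hbound : ∀ γ' ∈ Finset.univ (α := Fin n),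
          (v (l, (0 : Fin n), γ') : ℝ) * c (l, (0 : Fin n), γ') ^ 2 / 2
            ≤ sig l ^ 2 / n * B ^ 2 / 2 := by
        intro γ' _
        rw [hvcoe]
        simp only [hc, and_self, if_true]
        have h1 : (ε * y (k, γ')) ^ 2 ≤ B ^ 2 := by
          rw [mul_pow, hε2, one_mul]
          have := hy γ'
          nlinarith [abs_nonneg (y (k, γ')), sq_abs (y (k, γ'))]
        have h2 : (0:ℝ) < sig l ^ 2 / n := by
          have := hsig l
          positivity
        calc sig l ^ 2 / ↑n * (ε * y (k, γ')) ^ 2 / 2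
            ≤ sig l ^ 2 / ↑n * B ^ 2 / 2 := by nlinarith
          _ = sig l ^ 2 / ↑n * B ^ 2 / 2 := rfl
      calc ∑ γ' : Fin n, (v (l, (0 : Fin n), γ') : ℝ) * c (l, (0 : Fin n), γ') ^ 2 / 2
          ≤ ∑ γ' : Fin n, sig l ^ 2 / n * B ^ 2 / 2 := Finset.sum_le_sum hbound
        _ = n * (sig l ^ 2 / n * B ^ 2 / 2) := by
            rw [Finset.sum_const, Finset.card_univ, Fintype.card_fin, nsmul_eq_mul]
        _ = sig l ^ 2 * B ^ 2 / 2 := by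
            field_simp
    calc ∫⁻ u, φ (u, y) ∂(Measure.pi fun q => gaussianReal 0 (v q))
        = ∫⁻ u, ∏ q, ENNReal.ofReal (rexp (c q * u q))
            ∂(Measure.pi fun q => gaussianReal 0 (v q)) := by
          refine lintegral_congr fun u => ?_
          rw [hφ]
          simp only
          rw [hsum u, Real.exp_sum, ← ENNReal.ofReal_prod_of_nonneg
            (fun q _ => (Real.exp_pos _).le)]
      _ = ∏ q, ∫⁻ z, ENNReal.ofReal (rexp (c q * z)) ∂(gaussianReal 0 (v q)) :=
          lintegral_pi_prod (fun q => gaussianReal 0 (v q))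
            (fun q z => ENNReal.ofReal (rexp (c q * z)))
            (fun q => ((measurable_const_mul (c q)).exp).ennreal_ofReal)
      _ = ∏ q, ENNReal.ofReal (rexp ((v q : ℝ) * c q ^ 2 / 2)) := by
          exact Finset.prod_congr rfl fun q _ => gaussian_mgf_lintegral (c q) (hvne q)
      _ = ENNReal.ofReal (rexp (∑ q, (v q : ℝ) * c q ^ 2 / 2)) := by
          rw [Real.exp_sum, ← ENNReal.ofReal_prod_of_nonneg
            (fun q _ => (Real.exp_pos _).le)]
      _ ≤ ENNReal.ofReal (rexp (sig l ^ 2 * B ^ 2 / 2)) := by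
          exact ENNReal.ofReal_le_ofReal (Real.exp_le_exp.mpr hvar)
  -- step 8 : conclude
  calc ∫⁻ y, ∫⁻ u, φ (u, y) ∂(Measure.pi fun q => gaussianReal 0 (v q))
        ∂(μ.map G)
      ≤ ∫⁻ _, ENNReal.ofReal (rexp (sig l ^ 2 * B ^ 2 / 2)) ∂(μ.map G) := by
        refine lintegral_mono_ae ?_
        filter_upwards [hae] with y hy
        exact hinner y hy
    _ = ENNReal.ofReal (rexp (sig l ^ 2 * B ^ 2 / 2)) := by
        rw [lintegral_const, measure_univ, mul_one]
theorem sixth_moment_bound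
    (r L : ℕ) (sig : Fin L → ℝ) (hsig : ∀ l, 0 < sig l)
    (B : ℝ) (hB : 0 ≤ B)
    (Ω : Type) [MeasurableSpace Ω] (μ : Measure Ω) [IsProbabilityMeasure μ]
    (n : ℕ) (hn : 1 ≤ n)
    (V : Fin L → Ω → ℕ → ℕ → ℝ)
    (x : Fin r × Fin 2 → ℕ → Ω → ℝ)
    (hVmeas : ∀ l a b, Measurable (fun ω => V l ω a b))
    (hxmeas : ∀ k γ, Measurable (x k γ))
    (hVlaw : Measure.map (fun ω => fun q : Fin L × Fin n × Fin n => V q.1 ω q.2.1 q.2.2) μ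
        = Measure.pi
            (fun q : Fin L × Fin n × Fin n => gaussianReal 0 ((sig q.1 ^ 2 / n).toNNReal)))
    (hindep : IndepFun
      (fun ω => fun q : Fin L × Fin n × Fin n => V q.1 ω q.2.1 q.2.2)
      (fun ω => fun q : (Fin r × Fin 2) × Fin n => x q.1 q.2 ω) μ)
    (hxbound : ∀ᵐ ω ∂μ, ∀ k : Fin r × Fin 2, ∀ γ < n, |x k γ ω| ≤ B)
    (k : Fin r × Fin 2) (l : Fin L) :
    ∫⁻ ω, ENNReal.ofReal
        ((∑ γ ∈ Finset.range n, V l ω 0 γ * x k γ ω) ^ 6) ∂μ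
      ≤ ENNReal.ofReal (1440 * rexp (sig l ^ 2 * B ^ 2 / 2)) := by
  set S : Ω → ℝ := fun ω => ∑ γ ∈ Finset.range n, V l ω 0 γ * x k γ ω with hSdef
  have hSmeas : Measurable S :=
    Finset.measurable_sum _ fun γ _ => (hVmeas l 0 γ).mul (hxmeas k γ)
  have hpt : ∀ ω, ENNReal.ofReal ((S ω) ^ 6)
      ≤ ENNReal.ofReal 720 * (ENNReal.ofReal (rexp (1 * S ω))
          + ENNReal.ofReal (rexp ((-1) * S ω))) := by
    intro ω
    rw [← ENNReal.ofReal_add (Real.exp_nonneg _) (Real.exp_nonneg _),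
      ← ENNReal.ofReal_mul (by norm_num)]
    apply ENNReal.ofReal_le_ofReal
    have := pow_six_le_exp (S ω)
    rw [one_mul, neg_one_mul]
    linarith
  have hm1 : Measurable fun ω => ENNReal.ofReal (rexp (1 * S ω)) :=
    ((hSmeas.const_mul 1).exp).ennreal_ofReal
  have hm2 : Measurable fun ω => ENNReal.ofReal (rexp ((-1) * S ω)) :=
    ((hSmeas.const_mul (-1)).exp).ennreal_ofReal
  calc ∫⁻ ω, ENNReal.ofReal ((S ω) ^ 6) ∂μ
      ≤ ∫⁻ ω, ENNReal.ofReal 720 * (ENNReal.ofReal (rexp (1 * S ω))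
          + ENNReal.ofReal (rexp ((-1) * S ω))) ∂μ := lintegral_mono hpt
    _ = ENNReal.ofReal 720 * ((∫⁻ ω, ENNReal.ofReal (rexp (1 * S ω)) ∂μ)
          + ∫⁻ ω, ENNReal.ofReal (rexp ((-1) * S ω)) ∂μ) := by
        rw [lintegral_const_mul (f := fun ω => ENNReal.ofReal (rexp (1 * S ω)) + ENNReal.ofReal (rexp ((-1) * S ω))) _ (hm1.add hm2), lintegral_add_left hm1]
    _ ≤ ENNReal.ofReal 720 * (ENNReal.ofReal (rexp (sig l ^ 2 * B ^ 2 / 2))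
          + ENNReal.ofReal (rexp (sig l ^ 2 * B ^ 2 / 2))) := by
        apply mul_le_mul_right
        apply add_le_add
        · have h1 : ∀ ω, rexp (1 * S ω)
              = rexp (1 * ∑ γ ∈ Finset.range n, V l ω 0 γ * x k γ ω) := fun ω => rfl
          exact mgf_core_bound r L sig hsig B hB Ω μ n hn V x hVmeas hxmeas hVlaw hindep
            hxbound k l 1 (Or.inl rfl)
        · exact mgf_core_bound r L sig hsig B hB Ω μ n hn V x hVmeas hxmeas hVlaw hindep
            hxbound k l (-1) (Or.inr rfl)
    _ = ENNReal.ofReal (1440 * rexp (sig l ^ 2 * B ^ 2 / 2)) := by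
        rw [← ENNReal.ofReal_add (Real.exp_nonneg _) (Real.exp_nonneg _),
          ← ENNReal.ofReal_mul (by norm_num)]
        congr 1
        ring
/-- In Setup (DP), the third absolute moment of `X_1` (index `0` here) is `o(√n)` as the width `n` tends to infinity. -/
theorem statement10
    (r L : ℕ) (hr : 1 ≤ r) (hL : 1 ≤ L)
    (t : Fin r → ℝ) (sig : Fin L → ℝ) (hsig : ∀ l, 0 < sig l)
    (B : ℝ) (hB : 0 < B)
    (lab : Fin r × Fin 2 → Fin L) (hlab : ∀ i : Fin r, lab (i, 0) ≠ lab (i, 1))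
    (Ω : Type) [MeasurableSpace Ω] (μ : Measure Ω) [IsProbabilityMeasure μ]
    (V : ℕ → Fin L → Ω → ℕ → ℕ → ℝ)
    (x : ℕ → Fin r × Fin 2 → ℕ → Ω → ℝ)
    (hVmeas : ∀ n l a b, Measurable (fun ω => V n l ω a b))
    (hxmeas : ∀ n k γ, Measurable (x n k γ))
    (hVlaw : ∀ n : ℕ, 1 ≤ n →
      Measure.map (fun ω => fun q : Fin L × Fin n × Fin n => V n q.1 ω q.2.1 q.2.2) μ
        = Measure.pi
            (fun q : Fin L × Fin n × Fin n => gaussianReal 0 ((sig q.1 ^ 2 / n).toNNReal)))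
    (hindep : ∀ n : ℕ, IndepFun
      (fun ω => fun q : Fin L × Fin n × Fin n => V n q.1 ω q.2.1 q.2.2)
      (fun ω => fun q : (Fin r × Fin 2) × Fin n => x n q.1 q.2 ω) μ)
    (hxbound : ∀ n : ℕ, ∀ᵐ ω ∂μ, ∀ k : Fin r × Fin 2, ∀ γ < n, |x n k γ ω| ≤ B)
    (c : Fin r × Fin 2 → Fin r × Fin 2 → ℝ)
    (hc : ∀ k k' : Fin r × Fin 2, ∀ᵐ ω ∂μ, Tendsto
      (fun n : ℕ => (∑ γ ∈ Finset.range n, x n k γ ω * x n k' γ ω) / (n : ℝ))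
      atTop (𝓝 (c k k')))
    (X : ℕ → ℕ → Ω → ℝ)
    (hX : ∀ n α ω, X n α ω = ∑ i : Fin r, t i *
      ∑ γ1 ∈ Finset.range n, ∑ γ2 ∈ Finset.range n,
        V n (lab (i, 0)) ω α γ1 * V n (lab (i, 1)) ω α γ2 *
          x n (i, 0) γ1 ω * x n (i, 1) γ2 ω)
:
    Tendsto (fun n : ℕ => (∫ ω, |X n 0 ω| ^ 3 ∂μ) / Real.sqrt n) atTop (𝓝 0) := by
  classical
  set K : ℝ := 1440 * rexp ((∑ l, sig l ^ 2) * B ^ 2 / 2) with hK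
  have hK0 : 0 ≤ K := by positivity
  set C : ℝ := (r : ℝ) ^ 2 * (∑ i : Fin r, |t i| ^ 3) * K with hC
  have hC0 : 0 ≤ C := by positivity
  have hKl : ∀ l : Fin L, 1440 * rexp (sig l ^ 2 * B ^ 2 / 2) ≤ K := by
    intro l
    rw [hK]
    have h1 : sig l ^ 2 ≤ ∑ l', sig l' ^ 2 :=
      Finset.single_le_sum (f := fun l' => sig l' ^ 2) (fun l' _ => sq_nonneg _)
        (Finset.mem_univ l)
    have h2 : sig l ^ 2 * B ^ 2 / 2 ≤ (∑ l', sig l' ^ 2) * B ^ 2 / 2 := by nlinarith [sq_nonneg B]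
    have h3 := Real.exp_le_exp.mpr h2
    nlinarith [Real.exp_pos (sig l ^ 2 * B ^ 2 / 2)]
  have habs : ∀ (a b : ℝ), |a| ^ 3 * |b| ^ 3 ≤ (a ^ 6 + b ^ 6) / 2 := by
    intro a b
    have ha : (|a| ^ 3) ^ 2 = a ^ 6 := by
      rw [← pow_mul]
      norm_num
      rw [pow_abs, abs_of_nonneg (by positivity : (0:ℝ) ≤ a ^ 6)]
    have hb : (|b| ^ 3) ^ 2 = b ^ 6 := by
      rw [← pow_mul]
      norm_num
      rw [pow_abs, abs_of_nonneg (by positivity : (0:ℝ) ≤ b ^ 6)]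
    nlinarith [sq_nonneg (|a| ^ 3 - |b| ^ 3)]
  have hbound : ∀ n : ℕ, 1 ≤ n → ∫ ω, |X n 0 ω| ^ 3 ∂μ ≤ C := by
    intro n hn
    set S : Fin r → Fin 2 → Ω → ℝ :=
      fun i j ω => ∑ γ ∈ Finset.range n, V n (lab (i, j)) ω 0 γ * x n (i, j) γ ω with hS
    have hSmeas : ∀ i j, Measurable (S i j) := fun i j =>
      Finset.measurable_sum _ fun γ _ => (hVmeas n _ 0 γ).mul (hxmeas n _ γ)
    have hXeq : ∀ ω, X n 0 ω = ∑ i : Fin r, t i * (S i 0 ω * S i 1 ω) := by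
      intro ω
      rw [hX n 0 ω]
      refine Finset.sum_congr rfl fun i _ => ?_
      congr 1
      simp only [hS]
      rw [Finset.sum_mul_sum]
      exact Finset.sum_congr rfl fun γ1 _ => Finset.sum_congr rfl fun γ2 _ => by ring
    have hXmeas : Measurable (X n 0) := by
      have h : X n 0 = fun ω => ∑ i : Fin r, t i * (S i 0 ω * S i 1 ω) := funext hXeq
      rw [h]
      exact Finset.measurable_sum _ fun i _ => ((hSmeas i 0).mul (hSmeas i 1)).const_mul (t i)
    have hpt : ∀ ω, |X n 0 ω| ^ 3
        ≤ ∑ i : Fin r, (r : ℝ) ^ 2 * |t i| ^ 3 * ((S i 0 ω ^ 6 + S i 1 ω ^ 6) / 2) := by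
      intro ω
      have h1 : |X n 0 ω| ≤ ∑ i : Fin r, |t i| * |S i 0 ω| * |S i 1 ω| := by
        rw [hXeq ω]
        refine (Finset.abs_sum_le_sum_abs _ _).trans ?_
        refine Finset.sum_le_sum fun i _ => ?_
        rw [abs_mul, abs_mul, mul_assoc]
      have h2 : |X n 0 ω| ^ 3 ≤ (∑ i : Fin r, |t i| * |S i 0 ω| * |S i 1 ω|) ^ 3 :=
        pow_le_pow_left₀ (abs_nonneg _) h1 3
      have h3 := pow_sum_div_card_le_sum_pow (s := Finset.univ)
        (f := fun i : Fin r => |t i| * |S i 0 ω| * |S i 1 ω|) (fun i _ => by positivity) 2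
      rw [Finset.card_univ, Fintype.card_fin] at h3
      have hr2 : (0 : ℝ) < (r : ℝ) ^ 2 := by
        have : (0 : ℝ) < (r : ℝ) := by exact_mod_cast hr
        positivity
      have h4 : (∑ i : Fin r, |t i| * |S i 0 ω| * |S i 1 ω|) ^ 3
          ≤ (r : ℝ) ^ 2 * ∑ i : Fin r, (|t i| * |S i 0 ω| * |S i 1 ω|) ^ 3 := by
        rw [div_le_iff₀ hr2] at h3
        norm_num at h3
        linarith
      refine (h2.trans h4).trans ?_
      rw [Finset.mul_sum]
      refine Finset.sum_le_sum fun i _ => ?_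
      have h5 : (|t i| * |S i 0 ω| * |S i 1 ω|) ^ 3
          = |t i| ^ 3 * (|S i 0 ω| ^ 3 * |S i 1 ω| ^ 3) := by ring
      rw [h5]
      have h6 := habs (S i 0 ω) (S i 1 ω)
      have h7 : (0 : ℝ) ≤ |t i| ^ 3 := by positivity
      calc (r : ℝ) ^ 2 * (|t i| ^ 3 * (|S i 0 ω| ^ 3 * |S i 1 ω| ^ 3))
          ≤ (r : ℝ) ^ 2 * (|t i| ^ 3 * ((S i 0 ω ^ 6 + S i 1 ω ^ 6) / 2)) := by
            apply mul_le_mul_of_nonneg_left _ hr2.le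
            exact mul_le_mul_of_nonneg_left h6 h7
        _ = (r : ℝ) ^ 2 * |t i| ^ 3 * ((S i 0 ω ^ 6 + S i 1 ω ^ 6) / 2) := by ring
    have hIeq : ∫ ω, |X n 0 ω| ^ 3 ∂μ
        = (∫⁻ ω, ENNReal.ofReal (|X n 0 ω| ^ 3) ∂μ).toReal := by
      refine integral_eq_lintegral_of_nonneg_ae (ae_of_all _ fun ω => by positivity) ?_
      exact ((hXmeas.abs.pow_const 3)).aestronglyMeasurable
    have hS6meas : ∀ i j, Measurable fun ω => ENNReal.ofReal (S i j ω ^ 6) :=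
      fun i j => ((hSmeas i j).pow_const 6).ennreal_ofReal
    have hlb : ∫⁻ ω, ENNReal.ofReal (|X n 0 ω| ^ 3) ∂μ ≤ ENNReal.ofReal C := by
      calc ∫⁻ ω, ENNReal.ofReal (|X n 0 ω| ^ 3) ∂μ
          ≤ ∫⁻ ω, ∑ i : Fin r, ENNReal.ofReal ((r : ℝ) ^ 2 * |t i| ^ 3 / 2)
              * (ENNReal.ofReal (S i 0 ω ^ 6) + ENNReal.ofReal (S i 1 ω ^ 6)) ∂μ := by
            refine lintegral_mono fun ω => ?_
            refine (ENNReal.ofReal_le_ofReal (hpt ω)).trans ?_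
            rw [ENNReal.ofReal_sum_of_nonneg (fun i _ => by positivity)]
            refine Finset.sum_le_sum fun i _ => ?_
            rw [← ENNReal.ofReal_add (by positivity) (by positivity),
              ← ENNReal.ofReal_mul (by positivity)]
            apply ENNReal.ofReal_le_ofReal
            rw [div_mul_eq_mul_div, mul_comm]
            apply le_of_eq
            ring
        _ = ∑ i : Fin r, ENNReal.ofReal ((r : ℝ) ^ 2 * |t i| ^ 3 / 2)
              * ((∫⁻ ω, ENNReal.ofReal (S i 0 ω ^ 6) ∂μ)
                + ∫⁻ ω, ENNReal.ofReal (S i 1 ω ^ 6) ∂μ) := by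
            rw [lintegral_finset_sum (f := fun i ω => ENNReal.ofReal ((r : ℝ) ^ 2 * |t i| ^ 3 / 2) * (ENNReal.ofReal (S i 0 ω ^ 6) + ENNReal.ofReal (S i 1 ω ^ 6))) _ (fun i _ =>
              ((hS6meas i 0).add (hS6meas i 1)).const_mul _)]
            refine Finset.sum_congr rfl fun i _ => ?_
            rw [lintegral_const_mul (f := fun ω => ENNReal.ofReal (S i 0 ω ^ 6) + ENNReal.ofReal (S i 1 ω ^ 6)) _ ((hS6meas i 0).add (hS6meas i 1)),
              lintegral_add_left (hS6meas i 0)]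
        _ ≤ ∑ i : Fin r, ENNReal.ofReal ((r : ℝ) ^ 2 * |t i| ^ 3 / 2)
              * (ENNReal.ofReal K + ENNReal.ofReal K) := by
            refine Finset.sum_le_sum fun i _ => ?_
            refine mul_le_mul_right (add_le_add ?_ ?_) _
            · refine (sixth_moment_bound r L sig hsig B hB.le Ω μ n hn (V n) (x n)
                (hVmeas n) (hxmeas n) (hVlaw n hn) (hindep n) (hxbound n)
                (i, 0) (lab (i, 0))).trans ?_
              exact ENNReal.ofReal_le_ofReal (hKl _)
            · refine (sixth_moment_bound r L sig hsig B hB.le Ω μ n hn (V n) (x n)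
                (hVmeas n) (hxmeas n) (hVlaw n hn) (hindep n) (hxbound n)
                (i, 1) (lab (i, 1))).trans ?_
              exact ENNReal.ofReal_le_ofReal (hKl _)
        _ = ENNReal.ofReal C := by
            have hterm : ∀ i : Fin r, ENNReal.ofReal ((r : ℝ) ^ 2 * |t i| ^ 3 / 2)
                * (ENNReal.ofReal K + ENNReal.ofReal K)
                = ENNReal.ofReal (|t i| ^ 3 * ((r : ℝ) ^ 2 * K)) := by
              intro i
              rw [← ENNReal.ofReal_add hK0 hK0, ← ENNReal.ofReal_mul (by positivity)]
              congr 1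
              ring
            simp_rw [hterm]
            rw [← ENNReal.ofReal_sum_of_nonneg (fun i _ => by positivity)]
            congr 1
            rw [← Finset.sum_mul, hC]
            ring
    rw [hIeq]
    exact ENNReal.toReal_le_of_le_ofReal hC0 hlb
  have h0 : ∀ n : ℕ, 0 ≤ (∫ ω, |X n 0 ω| ^ 3 ∂μ) / Real.sqrt n := fun n =>
    div_nonneg (integral_nonneg fun ω => by positivity) (Real.sqrt_nonneg _)
  have hle : ∀ᶠ n in atTop, (∫ ω, |X n 0 ω| ^ 3 ∂μ) / Real.sqrt n ≤ C / Real.sqrt n := by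
    filter_upwards [eventually_ge_atTop 1] with n hn
    have hpos : 0 < Real.sqrt n := Real.sqrt_pos.mpr (by exact_mod_cast Nat.pos_of_ne_zero (by omega))
    gcongr
    exact hbound n hn
  have htend : Tendsto (fun n : ℕ => C / Real.sqrt n) atTop (𝓝 0) := by
    apply Tendsto.div_atTop tendsto_const_nhds
    have h2 : Tendsto Real.sqrt atTop atTop := by
      apply tendsto_atTop_atTop_of_monotone (fun a b hab => Real.sqrt_le_sqrt hab)
      intro b
      exact ⟨(max b 0) ^ 2, by
        rw [Real.sqrt_sq (le_max_right b 0)]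
        exact le_max_left b 0⟩
    exact h2.comp tendsto_natCast_atTop_atTop
  exact squeeze_zero' (Filter.Eventually.of_forall h0) hle htend
end
end
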